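/- Let m ≥ 0 and j = 2m+1. The generating function L_j(x) = (sqrt(1 − 4x + 4c_m x^{j+1}) − sqrt(1 − 4x))/(2x), where c_m is the m-th Catalan number, satisfies the equation L_j = c_m x^j + x L_j² + 2x L_j (C − L_j), where C(x) = (1 − sqrt(1−4x))/(2x) is the Catalan generating function. -/

import Mathlib

open PowerSeries in
/-- Let `m ≥ 0`, `j = 2m+1`.  The generating function
`L_j(x) = (sqrt(1 − 4x + 4c_m x^{j+1}) − sqrt(1 − 4x))/(2x)` satisfies
`L_j = c_m x^j + x L_j² + 2x L_j (C − L_j)`, where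
`C(x) = (1 − sqrt(1 − 4x))/(2x)` is the Catalan generating function.
Here `S₁` (resp. `S₂`) is the formal square root with constant term `1` of
`1 − 4x + 4c_m x^{j+1}` (resp. `1 − 4x`), `L` satisfies `2x·L = S₁ − S₂`, and
`Cat` satisfies `2x·Cat = 1 − S₂`. -/
theorem Lj_satisfies_equation (m : ℕ) (S₁ S₂ L Cat : PowerSeries ℚ)
    (hS₁0 : S₁.coeff 0 = 1)
    (hS₁ : S₁ ^ 2 = 1 - 4 * X + (4 * (catalan m : ℚ)) • X ^ (2 * m + 2))
    (hS₂0 : S₂.coeff 0 = 1)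
    (hS₂ : S₂ ^ 2 = 1 - 4 * X)
    (hL : (2 : ℚ) • (X * L) = S₁ - S₂)
    (hC : (2 : ℚ) • (X * Cat) = 1 - S₂) :
    L = (catalan m : ℚ) • X ^ (2 * m + 1) + X * L ^ 2 + 2 * X * L * (Cat - L) := by
  have key : (4 : PowerSeries ℚ) * (X * L) =
      4 * (X * ((catalan m : ℚ) • X ^ (2 * m + 1) + X * L ^ 2
        + 2 * X * L * (Cat - L))) := by
    simp only [smul_eq_C_mul, map_mul, map_ofNat] at hS₁ hL hC ⊢
    linear_combination hS₁ - hS₂ + (S₁ + S₂ + 2 * X * L) * hL - (4 * X * L) * hC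
  have h4 : (X : PowerSeries ℚ) * L =
      X * ((catalan m : ℚ) • X ^ (2 * m + 1) + X * L ^ 2
        + 2 * X * L * (Cat - L)) :=
    mul_left_cancel₀ (fun h => by simpa [map_ofNat] using congrArg (constantCoeff (R := ℚ)) h) key
  exact mul_left_cancel₀ PowerSeries.X_ne_zero h4
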